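/- Conditional KL Risk Decomposition: for every policy π and every φ with Z = φ(S,G), the conditional KL risk decomposes exactly as R(π;φ) = M(π;φ) + I(A;G|S,Z), where M(π;φ) is the modeling error and I(A;G|S,Z) is the representation error. -/

import Mathlib

open scoped Classical
open Finset
set_option linter.unusedSectionVars false

/-- Joint probability `P(f = x)` of a discrete random variable `f` on the sample space
`𝒮 × 𝒢 × 𝒜` equipped with the pmf `p`. -/
noncomputable def Pr {𝒮 𝒢 𝒜 : Type*} [Fintype 𝒮] [Fintype 𝒢] [Fintype 𝒜] {X : Type*}
    (p : 𝒮 × 𝒢 × 𝒜 → ℝ) (f : 𝒮 × 𝒢 × 𝒜 → X) (x : X) : ℝ :=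
  ∑ ω : 𝒮 × 𝒢 × 𝒜, if f ω = x then p ω else 0

/-- Conditional mutual information `I(X;Y|W)` of discrete random variables that are
deterministic functions of a sample drawn from the pmf `p` on `𝒮 × 𝒢 × 𝒜`. -/
noncomputable def CMI {𝒮 𝒢 𝒜 : Type*} [Fintype 𝒮] [Fintype 𝒢] [Fintype 𝒜]
    {X Y W : Type*} [Fintype X] [Fintype Y] [Fintype W]
    (p : 𝒮 × 𝒢 × 𝒜 → ℝ) (fX : 𝒮 × 𝒢 × 𝒜 → X) (fY : 𝒮 × 𝒢 × 𝒜 → Y)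
    (fW : 𝒮 × 𝒢 × 𝒜 → W) : ℝ :=
  ∑ x : X, ∑ y : Y, ∑ w : W,
    if 0 < Pr p (fun ω => (fX ω, fY ω, fW ω)) (x, y, w) then
      Pr p (fun ω => (fX ω, fY ω, fW ω)) (x, y, w) *
        Real.log ((Pr p (fun ω => (fX ω, fY ω, fW ω)) (x, y, w) * Pr p fW w) /
          (Pr p (fun ω => (fX ω, fW ω)) (x, w) * Pr p (fun ω => (fY ω, fW ω)) (y, w)))
    else 0

/-- Marginal `p(s,g) := ∑ₐ p(s,g,a)`. -/
noncomputable def pSG {𝒮 𝒢 𝒜 : Type*} [Fintype 𝒜] (p : 𝒮 × 𝒢 × 𝒜 → ℝ) (s : 𝒮) (g : 𝒢) : ℝ :=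
  ∑ a : 𝒜, p (s, g, a)

/-- Conditional `p(a|s,g) := p(s,g,a) / p(s,g)`. -/
noncomputable def pA {𝒮 𝒢 𝒜 : Type*} [Fintype 𝒜] (p : 𝒮 × 𝒢 × 𝒜 → ℝ) (s : 𝒮) (g : 𝒢)
    (a : 𝒜) : ℝ :=
  p (s, g, a) / pSG p s g

/-- Marginal `P(S = s, φ(S,G) = z) = ∑_{g' : φ(s,g')=z} p(s,g')`. -/
noncomputable def pSZ {𝒮 𝒢 𝒜 𝒵 : Type*} [Fintype 𝒢] [Fintype 𝒜] (p : 𝒮 × 𝒢 × 𝒜 → ℝ)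
    (φ : 𝒮 × 𝒢 → 𝒵) (s : 𝒮) (z : 𝒵) : ℝ :=
  ∑ g' : 𝒢, if φ (s, g') = z then pSG p s g' else 0

/-- Induced representation-conditioned distribution
`p(a|s,z) := (∑_{g' : φ(s,g')=z} p(s,g',a)) / (∑_{g' : φ(s,g')=z} p(s,g'))`. -/
noncomputable def pAZ {𝒮 𝒢 𝒜 𝒵 : Type*} [Fintype 𝒢] [Fintype 𝒜] (p : 𝒮 × 𝒢 × 𝒜 → ℝ)
    (φ : 𝒮 × 𝒢 → 𝒵) (s : 𝒮) (z : 𝒵) (a : 𝒜) : ℝ :=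
  (∑ g' : 𝒢, if φ (s, g') = z then p (s, g', a) else 0) /
    (∑ g' : 𝒢, if φ (s, g') = z then pSG p s g' else 0)

/-- The conditional KL risk `R(π;φ)`. -/
noncomputable def KLRisk {𝒮 𝒢 𝒜 𝒵 : Type*} [Fintype 𝒮] [Fintype 𝒢] [Fintype 𝒜]
    (p : 𝒮 × 𝒢 × 𝒜 → ℝ) (φ : 𝒮 × 𝒢 → 𝒵) (π : 𝒮 → 𝒵 → 𝒜 → ℝ) : ℝ :=
  ∑ s : 𝒮, ∑ g : 𝒢,
    if 0 < pSG p s g then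
      pSG p s g * ∑ a : 𝒜,
        (if 0 < pA p s g a then pA p s g a * Real.log (pA p s g a / π s (φ (s, g)) a) else 0)
    else 0

/-- The modeling error `M(π;φ)`. -/
noncomputable def ModelErr {𝒮 𝒢 𝒜 𝒵 : Type*} [Fintype 𝒮] [Fintype 𝒢] [Fintype 𝒜] [Fintype 𝒵]
    (p : 𝒮 × 𝒢 × 𝒜 → ℝ) (φ : 𝒮 × 𝒢 → 𝒵) (π : 𝒮 → 𝒵 → 𝒜 → ℝ) : ℝ :=
  ∑ s : 𝒮, ∑ z : 𝒵,
    if 0 < pSZ p φ s z then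
      pSZ p φ s z * ∑ a : 𝒜,
        (if 0 < pAZ p φ s z a then pAZ p φ s z a * Real.log (pAZ p φ s z a / π s z a) else 0)
    else 0

section Aux

variable {𝒮 𝒢 𝒜 𝒵 : Type*} [Fintype 𝒮] [Fintype 𝒢] [Fintype 𝒜] [Fintype 𝒵]

/-- `P(S=s, Z=z, A=a) = Σ_{g : φ(s,g)=z} p(s,g,a)`. -/
noncomputable def pSZA (p : 𝒮 × 𝒢 × 𝒜 → ℝ) (φ : 𝒮 × 𝒢 → 𝒵) (s : 𝒮) (z : 𝒵) (a : 𝒜) : ℝ :=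
  ∑ g : 𝒢, if φ (s, g) = z then p (s, g, a) else 0

variable (p : 𝒮 × 𝒢 × 𝒜 → ℝ) (φ : 𝒮 × 𝒢 → 𝒵)

lemma pSG_nonneg (hp0 : ∀ ω, 0 ≤ p ω) (s : 𝒮) (g : 𝒢) : 0 ≤ pSG p s g :=
  Finset.sum_nonneg fun _ _ => hp0 _

lemma pSZ_nonneg (hp0 : ∀ ω, 0 ≤ p ω) (s : 𝒮) (z : 𝒵) : 0 ≤ pSZ p φ s z :=
  Finset.sum_nonneg fun g _ => by
    by_cases h : φ (s, g) = z <;> simp [h, pSG_nonneg p hp0]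

lemma pSZA_nonneg (hp0 : ∀ ω, 0 ≤ p ω) (s : 𝒮) (z : 𝒵) (a : 𝒜) : 0 ≤ pSZA p φ s z a :=
  Finset.sum_nonneg fun g _ => by
    by_cases h : φ (s, g) = z <;> simp [h, hp0]

lemma le_pSG (hp0 : ∀ ω, 0 ≤ p ω) (s : 𝒮) (g : 𝒢) (a : 𝒜) : p (s, g, a) ≤ pSG p s g :=
  Finset.single_le_sum (fun a _ => hp0 (s, g, a)) (Finset.mem_univ a)

lemma pSG_le_pSZ (hp0 : ∀ ω, 0 ≤ p ω) (s : 𝒮) (g : 𝒢) :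
    pSG p s g ≤ pSZ p φ s (φ (s, g)) := by
  have := Finset.single_le_sum
    (f := fun g' => if φ (s, g') = φ (s, g) then pSG p s g' else 0)
    (fun g' _ => by by_cases h : φ (s, g') = φ (s, g) <;> simp [h, pSG_nonneg p hp0])
    (Finset.mem_univ g)
  simpa [pSZ] using this

lemma le_pSZA (hp0 : ∀ ω, 0 ≤ p ω) (s : 𝒮) (g : 𝒢) (a : 𝒜) :
    p (s, g, a) ≤ pSZA p φ s (φ (s, g)) a := by
  have := Finset.single_le_sum
    (f := fun g' => if φ (s, g') = φ (s, g) then p (s, g', a) else 0)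
    (fun g' _ => by by_cases h : φ (s, g') = φ (s, g) <;> simp [h, hp0 (s, g', a)])
    (Finset.mem_univ g)
  simpa [pSZA] using this

lemma pAZ_eq (s : 𝒮) (z : 𝒵) (a : 𝒜) : pAZ p φ s z a = pSZA p φ s z a / pSZ p φ s z := rfl

/-- Rewrite the KL risk as a sum over the support of `p`. -/
lemma klRisk_eq (hp0 : ∀ ω, 0 ≤ p ω) (π : 𝒮 → 𝒵 → 𝒜 → ℝ) :
    KLRisk p φ π = ∑ s : 𝒮, ∑ g : 𝒢, ∑ a : 𝒜,
      (if 0 < p (s, g, a) then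
        p (s, g, a) * Real.log (pA p s g a / π s (φ (s, g)) a) else 0) := by
  unfold KLRisk
  refine Finset.sum_congr rfl fun s _ => Finset.sum_congr rfl fun g _ => ?_
  by_cases h : 0 < pSG p s g
  · rw [if_pos h, Finset.mul_sum]
    refine Finset.sum_congr rfl fun a _ => ?_
    have hiff : 0 < pA p s g a ↔ 0 < p (s, g, a) := by
      unfold pA
      constructor
      · intro h'
        by_contra hc
        have : p (s, g, a) = 0 := le_antisymm (not_lt.mp hc) (hp0 _)
        rw [this] at h'; simp at h'
      · intro h'; exact div_pos h' h
    by_cases h2 : 0 < p (s, g, a)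
    · rw [if_pos (hiff.mpr h2), if_pos h2]
      unfold pA
      rw [← mul_assoc, mul_div_cancel₀ _ (ne_of_gt h)]
    · rw [if_neg (fun hh => h2 (hiff.mp hh)), if_neg h2, mul_zero]
  · rw [if_neg h]
    have hz : pSG p s g = 0 := le_antisymm (not_lt.mp h) (pSG_nonneg p hp0 s g)
    refine (Finset.sum_eq_zero fun a _ => ?_).symm
    have : p (s, g, a) = 0 :=
      le_antisymm ((le_pSG p hp0 s g a).trans hz.le) (hp0 _)
    simp [this]

/-- Rewrite the modeling error as a sum over the support of `p`. -/
lemma modelErr_eq (hp0 : ∀ ω, 0 ≤ p ω) (π : 𝒮 → 𝒵 → 𝒜 → ℝ) :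
    ModelErr p φ π = ∑ s : 𝒮, ∑ g : 𝒢, ∑ a : 𝒜,
      (if 0 < p (s, g, a) then
        p (s, g, a) *
          Real.log (pAZ p φ s (φ (s, g)) a / π s (φ (s, g)) a) else 0) := by
  unfold ModelErr
  have key : ∀ s z, (if 0 < pSZ p φ s z then
      pSZ p φ s z * ∑ a : 𝒜,
        (if 0 < pAZ p φ s z a then pAZ p φ s z a * Real.log (pAZ p φ s z a / π s z a) else 0)
    else 0) = ∑ a : 𝒜,
      (if 0 < pSZA p φ s z a then
        pSZA p φ s z a * Real.log (pAZ p φ s z a / π s z a) else 0) := by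
    intro s z
    by_cases h : 0 < pSZ p φ s z
    · rw [if_pos h, Finset.mul_sum]
      refine Finset.sum_congr rfl fun a _ => ?_
      have hiff : 0 < pAZ p φ s z a ↔ 0 < pSZA p φ s z a := by
        rw [pAZ_eq]
        constructor
        · intro h'
          by_contra hc
          have : pSZA p φ s z a = 0 :=
            le_antisymm (not_lt.mp hc) (pSZA_nonneg p φ hp0 s z a)
          rw [this] at h'; simp at h'
        · intro h'; exact div_pos h' h
      by_cases h2 : 0 < pSZA p φ s z a
      · rw [if_pos (hiff.mpr h2), if_pos h2, pAZ_eq, ← mul_assoc,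
          mul_div_cancel₀ _ (ne_of_gt h)]
      · rw [if_neg (fun hh => h2 (hiff.mp hh)), if_neg h2, mul_zero]
    · rw [if_neg h]
      have hz : pSZ p φ s z = 0 := le_antisymm (not_lt.mp h) (pSZ_nonneg p φ hp0 s z)
      refine (Finset.sum_eq_zero fun a _ => ?_).symm
      have hle : pSZA p φ s z a ≤ pSZ p φ s z := by
        refine Finset.sum_le_sum fun g _ => ?_
        by_cases hg : φ (s, g) = z <;> simp [hg, le_pSG p hp0 s g a]
      have : pSZA p φ s z a = 0 :=
        le_antisymm (hle.trans hz.le) (pSZA_nonneg p φ hp0 s z a)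
      simp [this]
  calc ∑ s : 𝒮, ∑ z : 𝒵, (if 0 < pSZ p φ s z then
        pSZ p φ s z * ∑ a : 𝒜,
          (if 0 < pAZ p φ s z a then pAZ p φ s z a * Real.log (pAZ p φ s z a / π s z a) else 0)
      else 0)
      = ∑ s : 𝒮, ∑ z : 𝒵, ∑ a : 𝒜,
        (if 0 < pSZA p φ s z a then
          pSZA p φ s z a * Real.log (pAZ p φ s z a / π s z a) else 0) := by
        refine Finset.sum_congr rfl fun s _ => Finset.sum_congr rfl fun z _ => key s z
    _ = ∑ s : 𝒮, ∑ z : 𝒵, ∑ a : 𝒜, ∑ g : 𝒢,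
        (if φ (s, g) = z ∧ 0 < p (s, g, a) then
          p (s, g, a) * Real.log (pAZ p φ s z a / π s z a) else 0) := by
        refine Finset.sum_congr rfl fun s _ => Finset.sum_congr rfl fun z _ =>
          Finset.sum_congr rfl fun a _ => ?_
        by_cases h : 0 < pSZA p φ s z a
        · rw [if_pos h]
          have : pSZA p φ s z a * Real.log (pAZ p φ s z a / π s z a)
              = ∑ g : 𝒢, (if φ (s, g) = z then p (s, g, a) else 0) *
                  Real.log (pAZ p φ s z a / π s z a) := by
            rw [← Finset.sum_mul]; rfl
          rw [this]
          refine Finset.sum_congr rfl fun g _ => ?_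
          by_cases hg : φ (s, g) = z
          · by_cases hpg : 0 < p (s, g, a)
            · simp [hg, hpg]
            · have : p (s, g, a) = 0 := le_antisymm (not_lt.mp hpg) (hp0 _)
              simp [hg, this]
          · simp [hg]
        · rw [if_neg h]
          have hz : pSZA p φ s z a = 0 :=
            le_antisymm (not_lt.mp h) (pSZA_nonneg p φ hp0 s z a)
          refine (Finset.sum_eq_zero fun g _ => ?_).symm
          by_cases hg : φ (s, g) = z
          · have hle : p (s, g, a) ≤ pSZA p φ s z a := by
              rw [← hg]; exact le_pSZA p φ hp0 s g a
            have : p (s, g, a) = 0 := le_antisymm (hle.trans hz.le) (hp0 _)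
            simp [this]
          · simp [hg]
    _ = ∑ s : 𝒮, ∑ g : 𝒢, ∑ a : 𝒜,
        (if 0 < p (s, g, a) then
          p (s, g, a) * Real.log (pAZ p φ s (φ (s, g)) a / π s (φ (s, g)) a) else 0) := by
        refine Finset.sum_congr rfl fun s _ => ?_
        calc ∑ z : 𝒵, ∑ a : 𝒜, ∑ g : 𝒢,
              (if φ (s, g) = z ∧ 0 < p (s, g, a) then
                p (s, g, a) * Real.log (pAZ p φ s z a / π s z a) else 0)
            = ∑ a : 𝒜, ∑ g : 𝒢, ∑ z : 𝒵,
              (if φ (s, g) = z ∧ 0 < p (s, g, a) then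
                p (s, g, a) * Real.log (pAZ p φ s z a / π s z a) else 0) := by
              rw [Finset.sum_comm]
              exact Finset.sum_congr rfl fun a _ => Finset.sum_comm
          _ = ∑ a : 𝒜, ∑ g : 𝒢,
              (if 0 < p (s, g, a) then
                p (s, g, a) *
                  Real.log (pAZ p φ s (φ (s, g)) a / π s (φ (s, g)) a) else 0) := by
              refine Finset.sum_congr rfl fun a _ => Finset.sum_congr rfl fun g _ => ?_
              simp [ite_and, Finset.sum_ite_eq]
          _ = _ := Finset.sum_comm

lemma Pr_W (w : 𝒮 × 𝒵) :
    Pr p (fun ω => (ω.1, φ (ω.1, ω.2.1))) w = pSZ p φ w.1 w.2 := by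
  obtain ⟨s, z⟩ := w
  unfold Pr pSZ pSG
  rw [Fintype.sum_prod_type]
  rw [Finset.sum_eq_single s (fun s' _ hs' => Finset.sum_eq_zero fun ga _ => by
        simp [Prod.ext_iff, hs'])
      (fun h => absurd (Finset.mem_univ s) h)]
  rw [Fintype.sum_prod_type]
  refine Finset.sum_congr rfl fun g _ => ?_
  by_cases h : φ (s, g) = z <;> simp [Prod.ext_iff, h]

lemma Pr_XW (a : 𝒜) (w : 𝒮 × 𝒵) :
    Pr p (fun ω => (ω.2.2, (ω.1, φ (ω.1, ω.2.1)))) (a, w) = pSZA p φ w.1 w.2 a := by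
  obtain ⟨s, z⟩ := w
  unfold Pr pSZA
  rw [Fintype.sum_prod_type]
  rw [Finset.sum_eq_single s (fun s' _ hs' => Finset.sum_eq_zero fun ga _ => by
        simp [Prod.ext_iff, hs'])
      (fun h => absurd (Finset.mem_univ s) h)]
  rw [Fintype.sum_prod_type]
  refine Finset.sum_congr rfl fun g _ => ?_
  by_cases h : φ (s, g) = z <;>
    simp [Prod.ext_iff, h, Finset.sum_ite_eq' (Finset.univ : Finset 𝒜) a]

lemma Pr_YW (g : 𝒢) (w : 𝒮 × 𝒵) :
    Pr p (fun ω => (ω.2.1, (ω.1, φ (ω.1, ω.2.1)))) (g, w) =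
      if φ (w.1, g) = w.2 then pSG p w.1 g else 0 := by
  obtain ⟨s, z⟩ := w
  unfold Pr pSG
  rw [Fintype.sum_prod_type]
  rw [Finset.sum_eq_single s (fun s' _ hs' => Finset.sum_eq_zero fun ga _ => by
        simp [Prod.ext_iff, hs'])
      (fun h => absurd (Finset.mem_univ s) h)]
  rw [Fintype.sum_prod_type]
  rw [Finset.sum_eq_single g (fun g' _ hg' => Finset.sum_eq_zero fun a _ => by
        simp [Prod.ext_iff, hg'])
      (fun h => absurd (Finset.mem_univ g) h)]
  by_cases h : φ (s, g) = z <;> simp [Prod.ext_iff, h]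

lemma Pr_XYW (a : 𝒜) (g : 𝒢) (w : 𝒮 × 𝒵) :
    Pr p (fun ω => (ω.2.2, ω.2.1, (ω.1, φ (ω.1, ω.2.1)))) (a, g, w) =
      if φ (w.1, g) = w.2 then p (w.1, g, a) else 0 := by
  obtain ⟨s, z⟩ := w
  unfold Pr
  rw [Fintype.sum_prod_type]
  rw [Finset.sum_eq_single s (fun s' _ hs' => Finset.sum_eq_zero fun ga _ => by
        simp [Prod.ext_iff, hs'])
      (fun h => absurd (Finset.mem_univ s) h)]
  rw [Fintype.sum_prod_type]
  rw [Finset.sum_eq_single g (fun g' _ hg' => Finset.sum_eq_zero fun a' _ => by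
        simp [Prod.ext_iff, hg'])
      (fun h => absurd (Finset.mem_univ g) h)]
  by_cases h : φ (s, g) = z <;>
    simp [Prod.ext_iff, h, Finset.sum_ite_eq' (Finset.univ : Finset 𝒜) a]

lemma cmi_eq (hp0 : ∀ ω, 0 ≤ p ω) :
    CMI p (fun ω => ω.2.2) (fun ω => ω.2.1) (fun ω => (ω.1, φ (ω.1, ω.2.1))) =
      ∑ s : 𝒮, ∑ g : 𝒢, ∑ a : 𝒜,
        (if 0 < p (s, g, a) then
          p (s, g, a) * Real.log (p (s, g, a) * pSZ p φ s (φ (s, g)) /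
            (pSZA p φ s (φ (s, g)) a * pSG p s g)) else 0) := by
  unfold CMI
  simp only [Pr_XYW p φ, Pr_W p φ, Pr_XW p φ, Pr_YW p φ]
  trans (∑ a : 𝒜, ∑ g : 𝒢, ∑ s : 𝒮,
      (if 0 < p (s, g, a) then
        p (s, g, a) * Real.log (p (s, g, a) * pSZ p φ s (φ (s, g)) /
          (pSZA p φ s (φ (s, g)) a * pSG p s g)) else 0))
  · refine Finset.sum_congr rfl fun a _ => Finset.sum_congr rfl fun g _ => ?_
    rw [Fintype.sum_prod_type]
    refine Finset.sum_congr rfl fun s _ => ?_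
    rw [Finset.sum_eq_single (φ (s, g))
      (fun z _ hz => by simp [Ne.symm hz])
      (fun h => absurd (Finset.mem_univ _) h)]
    simp
  · calc ∑ a : 𝒜, ∑ g : 𝒢, ∑ s : 𝒮,
          (if 0 < p (s, g, a) then
            p (s, g, a) * Real.log (p (s, g, a) * pSZ p φ s (φ (s, g)) /
              (pSZA p φ s (φ (s, g)) a * pSG p s g)) else 0)
        = ∑ g : 𝒢, ∑ s : 𝒮, ∑ a : 𝒜,
          (if 0 < p (s, g, a) then
            p (s, g, a) * Real.log (p (s, g, a) * pSZ p φ s (φ (s, g)) /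
              (pSZA p φ s (φ (s, g)) a * pSG p s g)) else 0) := by
          rw [Finset.sum_comm]
          exact Finset.sum_congr rfl fun g _ => Finset.sum_comm
      _ = _ := Finset.sum_comm

end Aux

/-- **Conditional KL Risk Decomposition.** For every policy `π` and
representation `φ` with `Z = φ(S,G)`, `R(π;φ) = M(π;φ) + I(A;G|S,Z)`. -/
theorem klRisk_eq_modelErr_add_cmi {𝒮 𝒢 𝒜 𝒵 : Type*}
    [Fintype 𝒮] [Fintype 𝒢] [Fintype 𝒜] [Fintype 𝒵]
    [Nonempty 𝒮] [Nonempty 𝒢] [Nonempty 𝒜] [Nonempty 𝒵]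
    (p : 𝒮 × 𝒢 × 𝒜 → ℝ) (hp0 : ∀ ω, 0 ≤ p ω) (hp1 : ∑ ω : 𝒮 × 𝒢 × 𝒜, p ω = 1)
    (φ : 𝒮 × 𝒢 → 𝒵) (π : 𝒮 → 𝒵 → 𝒜 → ℝ)
    (hπpos : ∀ s z a, 0 < π s z a) (hπsum : ∀ s z, ∑ a : 𝒜, π s z a = 1) :
    KLRisk p φ π =
      ModelErr p φ π +
        CMI p (fun ω => ω.2.2) (fun ω => ω.2.1) (fun ω => (ω.1, φ (ω.1, ω.2.1))) := by
  rw [klRisk_eq p φ hp0 π, modelErr_eq p φ hp0 π, cmi_eq p φ hp0,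
    ← Finset.sum_add_distrib]
  refine Finset.sum_congr rfl fun s _ => ?_
  rw [← Finset.sum_add_distrib]
  refine Finset.sum_congr rfl fun g _ => ?_
  rw [← Finset.sum_add_distrib]
  refine Finset.sum_congr rfl fun a _ => ?_
  by_cases hp : 0 < p (s, g, a)
  · rw [if_pos hp, if_pos hp, if_pos hp, ← mul_add]
    congr 1
    have hSG : 0 < pSG p s g := lt_of_lt_of_le hp (le_pSG p hp0 s g a)
    have hSZ : 0 < pSZ p φ s (φ (s, g)) := lt_of_lt_of_le hSG (pSG_le_pSZ p φ hp0 s g)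
    have hSZA : 0 < pSZA p φ s (φ (s, g)) a := lt_of_lt_of_le hp (le_pSZA p φ hp0 s g a)
    have hπ : 0 < π s (φ (s, g)) a := hπpos _ _ _
    have hApos : pA p s g a = p (s, g, a) / pSG p s g := rfl
    rw [hApos, pAZ_eq,
      Real.log_div (div_pos hp hSG).ne' hπ.ne',
      Real.log_div hp.ne' hSG.ne',
      Real.log_div (div_pos hSZA hSZ).ne' hπ.ne',
      Real.log_div hSZA.ne' hSZ.ne',
      Real.log_div (mul_pos hp hSZ).ne' (mul_pos hSZA hSG).ne',
      Real.log_mul hp.ne' hSZ.ne', Real.log_mul hSZA.ne' hSG.ne']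
    ring
  · rw [if_neg hp, if_neg hp, if_neg hp, add_zero]
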